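/- Let A be an n×n real matrix, C an m×n real matrix, and Q an n×n, R an m×m, Y an m×m symmetric positive definite real matrix, with S an n×n symmetric positive definite real matrix. Then the inequality (A S⁻¹ Aᵀ + Q)⁻¹ − S + Cᵀ(R + Y⁻¹)⁻¹C > 0 holds if and only if the 2×2 block matrix fromBlocks (Q⁻¹ − S + Cᵀ(R + Y⁻¹)⁻¹C) (Q⁻¹A) (AᵀQ⁻¹) (AᵀQ⁻¹A + S) is positive definite. -/

import Mathlib

open Matrix

/-- Schur complement criterion for positive definiteness (2,2-block version),
over `ℝ`. -/
lemma posDef_fromBlocks₂₂_aux {p q : ℕ} (A : Matrix (Fin p) (Fin p) ℝ)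
    (B : Matrix (Fin p) (Fin q) ℝ) {D : Matrix (Fin q) (Fin q) ℝ}
    (hD : D.PosDef) :
    (fromBlocks A B Bᴴ D).PosDef ↔ (A - B * D⁻¹ * Bᴴ).PosDef := by
  haveI := hD.isUnit.invertible
  constructor
  · intro h
    refine posDef_iff_dotProduct_mulVec.mpr ⟨(IsHermitian.fromBlocks₂₂ A B hD.1).mp h.1, fun x hx => ?_⟩
    have key := schur_complement_eq₂₂ A B x (-((D⁻¹ * Bᴴ) *ᵥ x)) hD.1
    rw [add_neg_cancel] at key
    simp only [star_zero, zero_vecMul, zero_dotProduct, zero_add] at key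
    have hz : (x ⊕ᵥ -((D⁻¹ * Bᴴ) *ᵥ x)) ≠ 0 := by
      intro h0
      apply hx
      funext i
      exact congrFun h0 (Sum.inl i)
    have := (posDef_iff_dotProduct_mulVec.mp h).2 hz
    rw [dotProduct_mulVec, key] at this
    rwa [dotProduct_mulVec]
  · intro h
    refine posDef_iff_dotProduct_mulVec.mpr ⟨(IsHermitian.fromBlocks₂₂ A B hD.1).mpr h.1, fun z hz => ?_⟩
    rw [dotProduct_mulVec, ← Sum.elim_comp_inl_inr z,
      schur_complement_eq₂₂ A B _ _ hD.1]
    by_cases hx : z ∘ Sum.inl = 0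
    · have hy : z ∘ Sum.inr ≠ 0 := by
        intro hy
        apply hz
        rw [← Sum.elim_comp_inl_inr z, hx, hy]
        funext i
        cases i <;> rfl
      refine add_pos_of_pos_of_nonneg ?_ ?_
      · have h1 := (posDef_iff_dotProduct_mulVec.mp hD).2 (by simpa [hx] using hy :
          (D⁻¹ * Bᴴ) *ᵥ (z ∘ Sum.inl) + z ∘ Sum.inr ≠ 0)
        rwa [dotProduct_mulVec] at h1
      · have := (posSemidef_iff_dotProduct_mulVec.mp h.posSemidef).2 (z ∘ Sum.inl)
        rwa [dotProduct_mulVec] at this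
    · refine add_pos_of_nonneg_of_pos ?_ ?_
      · have := (posSemidef_iff_dotProduct_mulVec.mp hD.posSemidef).2 ((D⁻¹ * Bᴴ) *ᵥ (z ∘ Sum.inl) + z ∘ Sum.inr)
        rwa [dotProduct_mulVec] at this
      · have := (posDef_iff_dotProduct_mulVec.mp h).2 hx
        rwa [dotProduct_mulVec] at this

/-- Schur-complement equivalence used in the event parameter design: for
symmetric positive definite `Q, R, Y, S`,
`(A S⁻¹ Aᵀ + Q)⁻¹ − S + Cᵀ(R + Y⁻¹)⁻¹C > 0` holds if and only if the block
matrix `[[Q⁻¹ − S + Cᵀ(R + Y⁻¹)⁻¹C, Q⁻¹A], [AᵀQ⁻¹, AᵀQ⁻¹A + S]]` is positive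
definite. -/
theorem stmt_13 {n m : ℕ} (A : Matrix (Fin n) (Fin n) ℝ)
    (C : Matrix (Fin m) (Fin n) ℝ)
    (Q : Matrix (Fin n) (Fin n) ℝ) (R Y : Matrix (Fin m) (Fin m) ℝ)
    (S : Matrix (Fin n) (Fin n) ℝ)
    (hQ : Q.PosDef) (hR : R.PosDef) (hY : Y.PosDef) (hS : S.PosDef) :
    ((A * S⁻¹ * Aᵀ + Q)⁻¹ - S + Cᵀ * (R + Y⁻¹)⁻¹ * C).PosDef ↔
      (fromBlocks (Q⁻¹ - S + Cᵀ * (R + Y⁻¹)⁻¹ * C) (Q⁻¹ * A)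
        (Aᵀ * Q⁻¹) (Aᵀ * Q⁻¹ * A + S)).PosDef := by
  set K := Cᵀ * (R + Y⁻¹)⁻¹ * C with hKdef
  -- `AᵀQ⁻¹A` is positive semidefinite
  have hAQA : (Aᵀ * Q⁻¹ * A).PosSemidef := by
    have := hQ.inv.posSemidef.conjTranspose_mul_mul_same A
    rwa [conjTranspose_eq_transpose_of_trivial] at this
  -- the `(2,2)` block is positive definite
  have hD : (Aᵀ * Q⁻¹ * A + S).PosDef := Matrix.PosDef.posSemidef_add hAQA hS
  -- `Aᵀ * Q⁻¹` is the conjugate transpose of `Q⁻¹ * A`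
  have hB : Aᵀ * Q⁻¹ = (Q⁻¹ * A)ᴴ := by
    rw [conjTranspose_mul, hQ.isHermitian.inv.eq,
      conjTranspose_eq_transpose_of_trivial]
  -- Woodbury identity
  have hW : (A * S⁻¹ * Aᵀ + Q)⁻¹ =
      Q⁻¹ - Q⁻¹ * A * (Aᵀ * Q⁻¹ * A + S)⁻¹ * (Aᵀ * Q⁻¹) := by
    have hSinv : S⁻¹⁻¹ = S := nonsing_inv_nonsing_inv S hS.det_pos.ne'.isUnit
    have hunit : IsUnit (S⁻¹⁻¹ + Aᵀ * Q⁻¹ * A) := by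
      rw [hSinv]
      exact (hS.add_posSemidef hAQA).isUnit
    rw [add_comm, add_mul_mul_inv_eq_sub Q A S⁻¹ Aᵀ hQ.isUnit hS.inv.isUnit hunit,
      hSinv, add_comm S (Aᵀ * Q⁻¹ * A), Matrix.mul_assoc (Q⁻¹ * A * _)]
  have hD' : ((Q⁻¹ * A)ᴴ * A + S).PosDef := by rw [← hB]; exact hD
  rw [hB, posDef_fromBlocks₂₂_aux _ _ hD', ← hB, hW]
  have : Q⁻¹ - Q⁻¹ * A * (Aᵀ * Q⁻¹ * A + S)⁻¹ * (Aᵀ * Q⁻¹) - S + K =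
      Q⁻¹ - S + K - Q⁻¹ * A * (Aᵀ * Q⁻¹ * A + S)⁻¹ * (Aᵀ * Q⁻¹) := by
    abel
  rw [this]
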